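/- arXiv:2205.15631 — 2 statements merged into one kernel-verified Lean document; each statement's English description precedes it below -/
import Mathlib

section
/- Any deterministic finite automaton accepting the language E_{n,k} = { u b v : u,v ∈ {a,b}*, |v| = c·n^k − 1 for some c > 0 } has at least 2^{n^k} states. -/
/-- The language `E_{n,k}` over the alphabet `{a,b}` (encoded as `Bool`, with
`a = false` and `b = true`): words `u b v` where `|v| = c·n^k − 1` for some `c > 0`. -/
def Enk (n k : ℕ) : Language Bool :=
  {w | ∃ (u v : List Bool) (c : ℕ), 0 < c ∧ w = u ++ [true] ++ v ∧
    v.length = c * n ^ k - 1}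

lemma mem_Enk_aux (N : ℕ) (hN : 0 < N) (g : Fin N → Bool) (i : Fin N) :
    (∃ (u v : List Bool) (c : ℕ), 0 < c ∧
      List.ofFn g ++ List.replicate i.val false = u ++ [true] ++ v ∧
      v.length = c * N - 1) ↔ g i = true := by
  have hiN : i.val < N := i.isLt
  constructor
  · rintro ⟨u, v, c, hc, heq, hv⟩
    have hlen : u.length + 1 + v.length = N + i.val := by
      have := congrArg List.length heq
      simp [List.length_append] at this
      omega
    have hcN : 1 ≤ c * N := Nat.one_le_iff_ne_zero.mpr (by positivity)
    have hv' : v.length + 1 = c * N := by omega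
    have hc1 : c = 1 := by
      rcases Nat.lt_or_ge c 2 with h2 | h2
      · omega
      · exfalso
        have hA : 2 * N ≤ c * N := Nat.mul_le_mul_right _ h2
        have hB : c * N ≤ N + i.val := by omega
        have hC : N + i.val < 2 * N := by omega
        exact lt_irrefl _ (lt_of_le_of_lt (hA.trans hB) hC)
    subst hc1
    have hu : u.length = i.val := by omega
    have h1 := List.getElem_of_eq heq (i := i.val) (by simp; omega)
    simp only [List.append_assoc] at h1
    rw [List.getElem_append_left (by simpa using hiN)] at h1
    rw [List.getElem_append_right (by omega)] at h1
    simp [hu] at h1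
    simpa using h1
  · intro hgi
    refine ⟨(List.ofFn g).take i.val,
      (List.ofFn g).drop (i.val + 1) ++ List.replicate i.val false, 1, one_pos, ?_, ?_⟩
    · have hsplit : List.ofFn g =
          (List.ofFn g).take i.val ++ [true] ++ (List.ofFn g).drop (i.val + 1) := by
        conv_lhs => rw [← List.take_append_drop i.val (List.ofFn g)]
        have hd : (List.ofFn g).drop i.val = true :: (List.ofFn g).drop (i.val + 1) := by
          rw [← List.getElem_cons_drop (by simpa using hiN : i.val < (List.ofFn g).length)]
          simp [hgi]
        rw [hd]
        simp
      conv_lhs => rw [hsplit]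
      simp [List.append_assoc]
    · simp
      omega

theorem dfa_lower_bound_Enk (n k : ℕ) (hn : 1 < n) (hk : 0 < k)
    (σ : Type) [Fintype σ] (M : DFA Bool σ) (hM : M.accepts = Enk n k) :
    2 ^ (n ^ k) ≤ Fintype.card σ := by
  have hNpos : 0 < n ^ k := Nat.pow_pos (by omega)
  have hinj : Function.Injective (fun g : Fin (n ^ k) → Bool => M.eval (List.ofFn g)) := by
    intro g h hgh
    simp only at hgh
    funext i
    have hacc : ∀ z : List Bool,
        (List.ofFn g ++ z) ∈ M.accepts ↔ (List.ofFn h ++ z) ∈ M.accepts := by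
      intro z
      simp only [DFA.mem_accepts, DFA.eval, DFA.evalFrom_of_append]
      rw [show M.evalFrom M.start (List.ofFn g) = M.evalFrom M.start (List.ofFn h) from hgh]
    have key := hacc (List.replicate i.val false)
    rw [hM] at key
    have key' : (g i = true) ↔ (h i = true) := by
      rw [← mem_Enk_aux (n ^ k) hNpos g i, ← mem_Enk_aux (n ^ k) hNpos h i]
      exact key
    cases hg : g i <;> cases hh : h i <;> simp_all
  calc 2 ^ (n ^ k) = Fintype.card (Fin (n ^ k) → Bool) := by simp
    _ ≤ Fintype.card σ := Fintype.card_le_of_injective _ hinj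
end

section
/- Any DFA accepting the block language B_k = { u₁#u₂#⋯#u_m : u_i ∈ {0,1}^k, m > 1, ∃ i < m with u_i = u_m } requires at least 2^{2^k} states. -/
/-- The block language `B_k` over the alphabet `{0,1,#}`, encoded as `Option Bool`
with `none = #` and `some b` a binary digit: `#`-separated blocks of length `k`
over `{0,1}`, at least two blocks, and the last block equals some earlier block. -/
def Bk (k : ℕ) : Language (Option Bool) :=
  {w | ∃ us : List (List Bool),
    2 ≤ us.length ∧ (∀ u ∈ us, u.length = k) ∧
    (∃ i < us.length - 1, us[i]? = us[us.length - 1]?) ∧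
    w = List.intercalate [none] (us.map (List.map some))}

/-- Encoding of a list of blocks. -/
def enc (us : List (List Bool)) : List (Option Bool) :=
  List.intercalate [none] (us.map (List.map some))

lemma enc_nil : enc [] = [] := rfl

lemma enc_single (a : List Bool) : enc [a] = a.map some := by
  simp [enc, List.intercalate]

lemma enc_cons_cons (a b : List Bool) (l : List (List Bool)) :
    enc (a :: b :: l) = a.map some ++ none :: enc (b :: l) := by
  simp [enc, List.intercalate]

lemma enc_append_last (a : List Bool) (as : List (List Bool)) (u : List Bool) :
    enc ((a :: as) ++ [u]) = enc (a :: as) ++ none :: u.map some := by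
  induction as generalizing a with
  | nil => simp [enc_cons_cons, enc_single]
  | cons b bs ih =>
    show enc (a :: b :: (bs ++ [u])) = enc (a :: b :: bs) ++ none :: u.map some
    rw [enc_cons_cons a b (bs ++ [u]), ← List.cons_append, ih b, enc_cons_cons a b bs]
    simp

lemma enc_inj {as bs : List (List Bool)} (ha : as ≠ []) (hb : bs ≠ [])
    (h : enc as = enc bs) : as = bs := by
  classical
  have hsplit : ∀ cs : List (List Bool), cs ≠ [] →
      List.splitOn none (enc cs) = cs.map (List.map some) := by
    intro cs hcs
    exact List.splitOn_intercalate (ls := cs.map (List.map some)) none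
      (by intro l hl
          simp only [List.mem_map] at hl
          obtain ⟨u, _, rfl⟩ := hl
          simp)
      (by simpa using hcs)
  have := (hsplit as ha).symm.trans (by rw [h, hsplit bs hb])
  exact List.map_injective_iff.mpr
    (List.map_injective_iff.mpr (Option.some_injective _)) this

theorem dfa_lower_bound_Bk (k : ℕ) (hk : 2 ≤ k)
    (σ : Type) [Fintype σ] (M : DFA (Option Bool) σ) (hM : M.accepts = Bk k) :
    2 ^ (2 ^ k) ≤ Fintype.card σ := by
  classical
  set wordOf : Finset (List.Vector Bool k) → List (Option Bool) :=
    fun S => enc (S.toList.map List.Vector.toList) with hwordOf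
  set cont : List.Vector Bool k → List (Option Bool) :=
    fun u => none :: u.toList.map some with hcont
  have key : ∀ (S : Finset (List.Vector Bool k)) (u : List.Vector Bool k),
      (wordOf S ++ cont u ∈ Bk k ↔ u ∈ S) := by
    intro S u
    rcases eq_or_ne S ∅ with rfl | hS
    · simp only [Finset.notMem_empty, iff_false]
      intro hmem
      obtain ⟨us, hlen, hblk, _, hw⟩ := hmem
      have hus : us ≠ [] := by rintro rfl; simp at hlen
      obtain ⟨v, rest, rfl⟩ := List.exists_cons_of_ne_nil hus
      have hv : v.length = k := hblk v (by simp)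
      obtain ⟨b, t, rfl⟩ : ∃ b t, v = b :: t := by
        cases v with
        | nil => simp at hv; omega
        | cons b t => exact ⟨b, t, rfl⟩
      have hw' : wordOf ∅ ++ cont u = enc ((b :: t) :: rest) := hw
      simp only [hwordOf, hcont] at hw'
      simp only [Finset.toList_empty, List.map_nil, enc_nil, List.nil_append] at hw'
      cases rest with
      | nil => rw [enc_single] at hw'; simp at hw'
      | cons c cs => rw [enc_cons_cons] at hw'; simp at hw'
    · have hSl : S.toList.map List.Vector.toList ≠ [] := by
        intro h
        rw [List.map_eq_nil_iff] at h
        exact hS (Finset.toList_eq_nil.mp h)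
      obtain ⟨a, as, hE⟩ := List.exists_cons_of_ne_nil hSl
      have hform : wordOf S ++ cont u
          = enc ((S.toList.map List.Vector.toList) ++ [u.toList]) := by
        show enc (S.toList.map List.Vector.toList) ++ (none :: u.toList.map some)
            = enc ((S.toList.map List.Vector.toList) ++ [u.toList])
        rw [hE, enc_append_last]
      constructor
      · intro hmem
        obtain ⟨us, hlen, hblk, ⟨i, hi, hgi⟩, hw⟩ := hmem
        rw [hform] at hw
        have hus : us = S.toList.map List.Vector.toList ++ [u.toList] :=
          enc_inj (by rintro rfl; simp at hlen) (by simp) hw.symm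
        subst hus
        simp only [List.length_append, List.length_cons, List.length_nil] at hi hgi
        have hilen : i < (S.toList.map List.Vector.toList).length := by omega
        rw [List.getElem?_append_left hilen,
          show (S.toList.map List.Vector.toList).length + 1 - 1
              = (S.toList.map List.Vector.toList).length by omega,
          List.getElem?_append_right (le_refl _), Nat.sub_self] at hgi
        have hgi' : (S.toList.map List.Vector.toList)[i]? = some u.toList := by
          simpa using hgi
        have humem : u.toList ∈ S.toList.map List.Vector.toList :=
          List.mem_of_getElem? hgi'
        simp only [List.mem_map, Finset.mem_toList] at humem
        obtain ⟨v, hv, hvu⟩ := humem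
        rwa [show v = u from List.Vector.toList_injective hvu] at hv
      · intro hu
        refine ⟨(S.toList.map List.Vector.toList) ++ [u.toList], ?_, ?_, ?_, hform⟩
        · rw [hE]; simp
        · intro v hv
          simp only [List.mem_append, List.mem_map, List.mem_singleton] at hv
          rcases hv with ⟨w, _, rfl⟩ | rfl <;> simp [List.Vector.toList_length]
        · have hml : u.toList ∈ S.toList.map List.Vector.toList := by
            simp only [List.mem_map, Finset.mem_toList]; exact ⟨u, hu, rfl⟩
          obtain ⟨i, hilt, hget⟩ := List.mem_iff_getElem.mp hml
          refine ⟨i, by simpa using hilt, ?_⟩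
          rw [List.getElem?_append_left hilt,
            show ((S.toList.map List.Vector.toList) ++ [u.toList]).length - 1
                = (S.toList.map List.Vector.toList).length by simp,
            List.getElem?_append_right (le_refl _), Nat.sub_self]
          simp only [List.getElem?_eq_getElem hilt, hget]
          rfl
  have hinj : Function.Injective
      (fun S : Finset (List.Vector Bool k) => M.eval (wordOf S)) := by
    intro S S' h
    by_contra hne
    have hex : ∃ u, (u ∈ S ∧ u ∉ S') ∨ (u ∈ S' ∧ u ∉ S) := by
      by_contra hc
      push_neg at hc
      exact hne (Finset.ext fun u => by have := hc u; tauto)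
    obtain ⟨u, hu⟩ := hex
    have heval : ∀ T : Finset (List.Vector Bool k),
        (wordOf T ++ cont u ∈ Bk k) ↔
          M.evalFrom (M.eval (wordOf T)) (cont u) ∈ M.accept := by
      intro T
      rw [← hM, DFA.mem_accepts, DFA.eval, DFA.evalFrom_of_append]
    have h' : M.eval (wordOf S) = M.eval (wordOf S') := h
    have hiff : (u ∈ S) ↔ (u ∈ S') := by
      rw [← key S u, ← key S' u, heval S, heval S', h']
    tauto
  calc 2 ^ (2 ^ k) = Fintype.card (Finset (List.Vector Bool k)) := by
        rw [Fintype.card_finset, card_vector, Fintype.card_bool]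
    _ ≤ Fintype.card σ := Fintype.card_le_of_injective _ hinj
end
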